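/- Let Ω be a finite set, F : Ω → ℝ≥0 with ∑_ω F(ω) = 1, r : Ω → [0,1], p : Ω → ℝ≥0, and ε ∈ (0,1]. Define p̂(ω) := (1−√ε)·p(ω) + √ε·r(ω). Suppose G : Ω → ℝ≥0 with ∑_ω G(ω) = 1 and real numbers c_F, c_G ∈ ℝ satisfy (i) ∑_ω G(ω)·p̂(ω) − c_G ≥ ∑_ω F(ω)·p̂(ω) − c_F and (ii) ∑_ω F(ω)·p(ω) − c_F ≥ ∑_ω G(ω)·p(ω) − c_G − ε. Then ∑_ω G(ω)·(r(ω) − p̂(ω)) ≥ ∑_ω F(ω)·(r(ω) − p(ω)) − 2√ε. -/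
import Mathlib


open Finset

theorem toIC_core_inequality {Ω : Type*} [Fintype Ω]
    (F G : Ω → ℝ) (hF0 : ∀ ω, 0 ≤ F ω) (hF1 : ∑ ω, F ω = 1)
    (hG0 : ∀ ω, 0 ≤ G ω) (hG1 : ∑ ω, G ω = 1)
    (r p : Ω → ℝ) (hr0 : ∀ ω, 0 ≤ r ω) (hr1 : ∀ ω, r ω ≤ 1) (hp : ∀ ω, 0 ≤ p ω)
    (ε : ℝ) (hε0 : 0 < ε) (hε1 : ε ≤ 1)
    (cF cG : ℝ)
    (h1 : ∑ ω, G ω * ((1 - Real.sqrt ε) * p ω + Real.sqrt ε * r ω) - cG ≥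
          ∑ ω, F ω * ((1 - Real.sqrt ε) * p ω + Real.sqrt ε * r ω) - cF)
    (h2 : ∑ ω, F ω * p ω - cF ≥ ∑ ω, G ω * p ω - cG - ε) :
    ∑ ω, G ω * (r ω - ((1 - Real.sqrt ε) * p ω + Real.sqrt ε * r ω)) ≥
      ∑ ω, F ω * (r ω - p ω) - 2 * Real.sqrt ε := by
  set s := Real.sqrt ε with hs
  have hs0 : 0 < s := Real.sqrt_pos.mpr hε0
  have hs1 : s ≤ 1 := by
    rw [hs, show (1:ℝ) = Real.sqrt 1 by simp]
    exact Real.sqrt_le_sqrt hε1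
  have hss : s * s = ε := Real.mul_self_sqrt hε0.le
  have hRg : ∑ ω, G ω * r ω ≤ 1 := by
    calc ∑ ω, G ω * r ω ≤ ∑ ω, G ω := by
          apply Finset.sum_le_sum
          intro ω _
          nlinarith [hG0 ω, hr1 ω, hr0 ω]
      _ = 1 := hG1
  have hPg : 0 ≤ ∑ ω, G ω * p ω :=
    Finset.sum_nonneg fun ω _ => mul_nonneg (hG0 ω) (hp ω)
  have eG : ∑ ω, G ω * ((1 - s) * p ω + s * r ω)
      = (1 - s) * ∑ ω, G ω * p ω + s * ∑ ω, G ω * r ω := by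
    rw [Finset.mul_sum, Finset.mul_sum, ← Finset.sum_add_distrib]
    congr 1; ext ω; ring
  have eF : ∑ ω, F ω * ((1 - s) * p ω + s * r ω)
      = (1 - s) * ∑ ω, F ω * p ω + s * ∑ ω, F ω * r ω := by
    rw [Finset.mul_sum, Finset.mul_sum, ← Finset.sum_add_distrib]
    congr 1; ext ω; ring
  have eG2 : ∑ ω, G ω * (r ω - ((1 - s) * p ω + s * r ω))
      = (1 - s) * ∑ ω, G ω * r ω - (1 - s) * ∑ ω, G ω * p ω := by
    rw [Finset.mul_sum, Finset.mul_sum, ← Finset.sum_sub_distrib]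
    congr 1; ext ω; ring
  have eF2 : ∑ ω, F ω * (r ω - p ω)
      = ∑ ω, F ω * r ω - ∑ ω, F ω * p ω := by
    rw [← Finset.sum_sub_distrib]
    congr 1; ext ω; ring
  rw [eG, eF] at h1
  rw [eG2, eF2]
  nlinarith [h1, h2, hRg, hPg, hs0, hs1, hss]
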